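/- Let p > 3 be a prime, m a positive integer, and n = 2m. For the power mapping F(x) = x^{p^m+2} over F_{p^n} and b ∈ F_{p^n}, one has δ(b) = 1 if and only if b = 1/4. -/
import Mathlib

/-- The number of `x` in the field `F` with `(x+1)^d - x^d = b`. -/
def deltaF (F : Type*) [Field F] [Fintype F] [DecidableEq F] (d : ℕ) (b : F) : ℕ :=
  (Finset.univ.filter (fun x : F => (x + 1) ^ d - x ^ d = b)).card

/-- The number of `b` in the field `F` with `deltaF F d b = i`. -/
def omegaF (F : Type*) [Field F] [Fintype F] [DecidableEq F] (d i : ℕ) : ℕ :=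
  (Finset.univ.filter (fun b : F => deltaF F d b = i)).card

/-- For `x^(p^m+2)` over `F_{p^n}` with `p > 3` prime and `n = 2m`:
`δ(b) = 1` if and only if `b = 1/4`. -/
theorem stmt9 (p : ℕ) (hp : p.Prime) (hp3 : 3 < p) (m : ℕ) (hm : 0 < m) (n : ℕ)
    (hn : n = 2 * m)
    (F : Type*) [Field F] [Fintype F] [DecidableEq F]
    (hF : Fintype.card F = p ^ n) :
    ∀ b : F, deltaF F (p ^ m + 2) b = 1 ↔ b = (4 : F)⁻¹ := by
  haveI := Fact.mk hp
  -- characteristic p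
  have hchar : CharP F p := by
    haveI : CharP F (ringChar F) := ringChar.charP F
    have hrp : (ringChar F).Prime := CharP.char_is_prime F (ringChar F)
    have h0 : ((p : F)) ^ n = 0 := by
      have := FiniteField.cast_card_eq_zero F
      rw [hF] at this
      push_cast at this
      exact this
    have hp0 : (p : F) = 0 := by
      have hn0 : n ≠ 0 := by omega
      exact pow_eq_zero_iff hn0 |>.mp h0
    have : ringChar F ∣ p := (CharP.cast_eq_zero_iff F (ringChar F) p).mp hp0
    have : ringChar F = p := (Nat.prime_dvd_prime_iff_eq hrp hp).mp this
    rw [← this]; infer_instance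
  haveI := hchar
  have h2 : (2 : F) ≠ 0 := by
    intro h
    have := (CharP.cast_eq_zero_iff F p 2).mp (by exact_mod_cast h)
    have := Nat.le_of_dvd (by norm_num) this
    omega
  have h3 : (3 : F) ≠ 0 := by
    intro h
    have := (CharP.cast_eq_zero_iff F p 3).mp (by exact_mod_cast h)
    have := Nat.le_of_dvd (by norm_num) this
    omega
  have h4 : (4 : F) ≠ 0 := by
    have : (4 : F) = 2 * 2 := by norm_num
    rw [this]; exact mul_ne_zero h2 h2
  set q := p ^ m with hq
  have hq1 : 1 ≤ q := Nat.one_le_pow _ _ (by omega)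
  have hqodd : Odd q := (hp.odd_of_ne_two (by omega)).pow
  have hfix2 : (2 : F) ^ q = 2 := by
    have := add_pow_char_pow (1 : F) 1 p m
    norm_num at this
    simpa using this
  have hfixinv2 : (2⁻¹ : F) ^ q = 2⁻¹ := by
    rw [inv_pow, hfix2]
  have hxq2 : ∀ y : F, (y ^ q) ^ q = y := by
    intro y
    have hqq : q * q = p ^ n := by
      rw [hn, hq, ← pow_add, two_mul]
    rw [← pow_mul, hqq, ← hF]
    exact FiniteField.pow_card y
  -- key formula
  have key : ∀ x : F, (x + 1) ^ (q + 2) - x ^ (q + 2)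
      = 2 * (x + 2⁻¹) * (x + 2⁻¹) ^ q + (x + 2⁻¹) ^ 2 + 4⁻¹ := by
    intro x
    have e1 : x + 1 = (x + 2⁻¹) + 2⁻¹ := by field_simp; ring
    have e2 : x = (x + 2⁻¹) - 2⁻¹ := by ring
    have hA : ((x + 2⁻¹) + 2⁻¹) ^ (q + 2) = ((x + 2⁻¹) ^ q + 2⁻¹) * ((x + 2⁻¹) + 2⁻¹) ^ 2 := by
      rw [pow_add, add_pow_char_pow, hfixinv2]
    have hB : ((x + 2⁻¹) - 2⁻¹) ^ (q + 2) = ((x + 2⁻¹) ^ q - 2⁻¹) * ((x + 2⁻¹) - 2⁻¹) ^ 2 := by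
      rw [pow_add, sub_pow_char_pow, hfixinv2]
    calc (x + 1) ^ (q + 2) - x ^ (q + 2)
        = ((x + 2⁻¹) + 2⁻¹) ^ (q + 2) - ((x + 2⁻¹) - 2⁻¹) ^ (q + 2) := by rw [← e1, ← e2]
      _ = ((x + 2⁻¹) ^ q + 2⁻¹) * ((x + 2⁻¹) + 2⁻¹) ^ 2
          - ((x + 2⁻¹) ^ q - 2⁻¹) * ((x + 2⁻¹) - 2⁻¹) ^ 2 := by rw [hA, hB]
      _ = 2 * (x + 2⁻¹) * (x + 2⁻¹) ^ q + (x + 2⁻¹) ^ 2 + 4⁻¹ := by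
          generalize (x + 2⁻¹ : F) ^ q = v
          field_simp
          ring
  intro b
  have hd : p ^ m + 2 = q + 2 := rfl
  rw [deltaF]
  constructor
  · intro h
    rw [Finset.card_eq_one] at h
    obtain ⟨a, ha⟩ := h
    have haS : a ∈ Finset.univ.filter (fun x : F => (x + 1) ^ (p ^ m + 2) - x ^ (p ^ m + 2) = b) := by
      rw [ha]; exact Finset.mem_singleton_self a
    have haD : (a + 1) ^ (q + 2) - a ^ (q + 2) = b := (Finset.mem_filter.mp haS).2
    have ha'D : (-1 - a + 1) ^ (q + 2) - (-1 - a) ^ (q + 2) = b := by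
      rw [key]
      have hyneg : (-1 - a + 2⁻¹ : F) = -(a + 2⁻¹) := by field_simp; ring
      rw [hyneg, hqodd.neg_pow]
      rw [key] at haD
      rw [← haD]; ring
    have ha'S : (-1 - a) ∈ Finset.univ.filter (fun x : F => (x + 1) ^ (p ^ m + 2) - x ^ (p ^ m + 2) = b) := by
      rw [Finset.mem_filter]; exact ⟨Finset.mem_univ _, ha'D⟩
    rw [ha, Finset.mem_singleton] at ha'S
    have haval : a = -2⁻¹ := by
      have h2a : 2 * a = -1 := by linear_combination -ha'S
      field_simp
      linear_combination h2a
    rw [← haD, key, haval]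
    norm_num
  · intro hb
    rw [Finset.card_eq_one]
    refine ⟨-2⁻¹, ?_⟩
    ext x
    rw [Finset.mem_filter, Finset.mem_singleton]
    simp only [Finset.mem_univ, true_and]
    rw [hd, key, hb]
    constructor
    · intro hx
      set y := x + 2⁻¹ with hy
      have hfac : y * (2 * y ^ q + y) = 0 := by linear_combination hx
      rcases mul_eq_zero.mp hfac with h0 | h0
      · have : x = -2⁻¹ := by linear_combination h0
        exact this
      · -- 2 y^q + y = 0
        have hq0 : (2 * (y ^ q) + y) ^ q = 0 := by rw [h0]; exact zero_pow (by omega)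
        rw [add_pow_char_pow, mul_pow, hfix2, hxq2] at hq0
        -- 2*y + y^q = 0 and 2*y^q + y = 0 ⟹ 3*y = 0
        have h3y : (3 : F) * y = 0 := by linear_combination 2 * hq0 - h0
        have hy0 : y = 0 := by
          rcases mul_eq_zero.mp h3y with h | h
          · exact absurd h h3
          · exact h
        have : x = -2⁻¹ := by linear_combination hy0
        exact this
    · intro hx
      rw [hx]
      norm_num
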